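/- Let T be a tree with at least 5 vertices, and let T' be the subtree of T obtained by deleting all leaves of T. If T' has at least 3 leaves, then tr(T) = tr(T') + 6. -/

import Mathlib

/-- The triameter of a graph `G`: the maximum of `d(a,b) + d(a,c) + d(b,c)`
over all triples of vertices `a, b, c`. -/
noncomputable def SimpleGraph.triameter {V : Type*} [Fintype V] (G : SimpleGraph V) : ℕ :=
  Finset.univ.sup fun p : V × V × V =>
    G.dist p.1 p.2.1 + G.dist p.1 p.2.2 + G.dist p.2.1 p.2.2

instance {V W : Type*} (f : V → W) (G : SimpleGraph W) [DecidableRel G.Adj] :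
    DecidableRel (G.comap f).Adj :=
  fun a b => inferInstanceAs (Decidable (G.Adj (f a) (f b)))

open SimpleGraph Walk Finset

section Aux

variable {W : Type*} {G : SimpleGraph W}

lemma tree_path_length (hT : G.IsTree) {u v : W} (p : G.Walk u v) (hp : p.IsPath) :
    p.length = G.dist u v := by
  obtain ⟨q, hq, hlen⟩ := hT.isConnected.exists_path_of_dist u v
  have : p = q := (hT.existsUnique_path u v).unique hp hq
  rw [this, hlen]

lemma takeUntil_cons' [DecidableEq W] {v x w u : W} (r : G.Adj v x) (p : G.Walk x w)
    (h : u ∈ (Walk.cons r p).support) (hne : v ≠ u) (h' : u ∈ p.support) :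
    (Walk.cons r p).takeUntil u h = Walk.cons r (p.takeUntil u h') := by
  simp [Walk.takeUntil, dif_neg hne]

lemma cons_eq_cons_snd {a v m m' : W} {e : G.Adj a m} {e' : G.Adj a m'}
    {q : G.Walk m v} {q' : G.Walk m' v}
    (h : (Walk.cons e q) = (Walk.cons e' q')) : m = m' := by
  have := congrArg Walk.support h
  rw [Walk.support_cons, Walk.support_cons, q.support_eq_cons, q'.support_eq_cons] at this
  exact (List.cons.injEq _ _ _ _ ▸ this).2 |> fun h => (List.cons.injEq _ _ _ _ ▸ h).1

/-- uniqueness of the neighbour towards `b` -/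
lemma tree_towards_unique (hT : G.IsTree) {a b m m' : W}
    (hm : G.Adj a m) (hm' : G.Adj a m')
    (hd : G.dist m b + 1 = G.dist a b) (hd' : G.dist m' b + 1 = G.dist a b) : m = m' := by
  obtain ⟨q, hq, hlq⟩ := hT.isConnected.exists_path_of_dist m b
  obtain ⟨q', hq', hlq'⟩ := hT.isConnected.exists_path_of_dist m' b
  have ha : a ∉ q.support := by
    intro hmem
    classical
    have := tree_path_length hT _ (hq.dropUntil hmem)
    have hspec := congrArg Walk.length (q.take_spec hmem)
    rw [Walk.length_append] at hspec
    omega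
  have ha' : a ∉ q'.support := by
    intro hmem
    classical
    have := tree_path_length hT _ (hq'.dropUntil hmem)
    have hspec := congrArg Walk.length (q'.take_spec hmem)
    rw [Walk.length_append] at hspec
    omega
  have h1 : (Walk.cons hm q).IsPath := hq.cons ha
  have h2 : (Walk.cons hm' q').IsPath := hq'.cons ha'
  exact cons_eq_cons_snd ((hT.existsUnique_path a b).unique h1 h2)


/-- In a tree, if the two geodesics from `a` to `b` and from `a` to `c` start with different
edges, then `d(b,c) = d(a,b) + d(a,c)`. Stated contrapositively below via `tree_step`. -/
lemma tree_common_first_step (hT : G.IsTree) {a b c mb mc : W}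
    (eb : G.Adj a mb) (ec : G.Adj a mc)
    {pb : G.Walk mb b} {pc : G.Walk mc c}
    (hpb : (Walk.cons eb pb).IsPath) (hpc : (Walk.cons ec pc).IsPath)
    (hne : mb ≠ mc) :
    G.dist b c = G.dist a b + G.dist a c := by
  classical
  -- supports intersect only at a
  have hdisj : ∀ v, v ∈ (Walk.cons eb pb).support → v ∈ (Walk.cons ec pc).support → v = a := by
    intro v hv1 hv2
    by_contra hva
    have hv1' : v ∈ pb.support := by
      rcases List.mem_cons.1 (Walk.support_cons eb pb ▸ hv1 : v ∈ a :: pb.support) with h | h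
      · exact absurd h hva
      · exact h
    have hv2' : v ∈ pc.support := by
      rcases List.mem_cons.1 (Walk.support_cons ec pc ▸ hv2 : v ∈ a :: pc.support) with h | h
      · exact absurd h hva
      · exact h
    have h1 : (Walk.cons eb pb).takeUntil v hv1 = Walk.cons eb (pb.takeUntil v hv1') :=
      takeUntil_cons' eb pb hv1 (fun h => hva h.symm) hv1'
    have h2 : (Walk.cons ec pc).takeUntil v hv2 = Walk.cons ec (pc.takeUntil v hv2') :=
      takeUntil_cons' ec pc hv2 (fun h => hva h.symm) hv2'
    have heq : (Walk.cons eb pb).takeUntil v hv1 = (Walk.cons ec pc).takeUntil v hv2 :=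
      (hT.existsUnique_path a v).unique (hpb.takeUntil hv1) (hpc.takeUntil hv2)
    rw [h1, h2] at heq
    exact hne (cons_eq_cons_snd heq)
  -- glue into a path from b to c
  set P := Walk.cons eb pb with hP
  set Q := Walk.cons ec pc with hQ
  have hw : (P.reverse.append Q).IsPath := by
    rw [Walk.isPath_def, Walk.support_append, Walk.support_reverse]
    refine List.Nodup.append (by simpa using hpb.support_nodup) ?_ ?_
    · exact hpc.support_nodup.tail
    · intro y hy hy'
      have hy1 : y ∈ P.support := by simpa using hy
      have hy2 : y ∈ Q.support := List.mem_of_mem_tail hy'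
      have hya : y = a := hdisj y hy1 hy2
      rw [hya] at hy'
      have hQs : Q.support = a :: Q.support.tail := Q.support_eq_cons
      have hnd := hpc.support_nodup
      rw [hQs] at hnd
      exact (List.nodup_cons.1 hnd).1 hy'
  have hlen := tree_path_length hT _ hw
  rw [Walk.length_append, Walk.length_reverse] at hlen
  have h1 : P.length = G.dist a b := tree_path_length hT _ hpb
  have h2 : Q.length = G.dist a c := tree_path_length hT _ hpc
  omega

lemma tree_dist_adj (hT : G.IsTree) {u v x : W} (h : G.Adj u v) :
    G.dist x v = G.dist x u + 1 ∨ G.dist x u = G.dist x v + 1 := by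
  classical
  obtain ⟨p, hp, hl⟩ := hT.isConnected.exists_path_of_dist x u
  by_cases hv : v ∈ p.support
  · right
    have ht : (p.takeUntil v hv).length = G.dist x v :=
      tree_path_length hT _ (hp.takeUntil hv)
    have hd : (p.dropUntil v hv).length = G.dist v u :=
      tree_path_length hT _ (hp.dropUntil hv)
    have hdu : G.dist v u = 1 := (G.dist_eq_one_iff_adj).2 h.symm
    have hspec := congrArg Walk.length (p.take_spec hv)
    rw [Walk.length_append] at hspec
    omega
  · left
    have hp2 : (p.concat h).IsPath := by
      rw [Walk.concat_eq_append]
      rw [Walk.isPath_def, Walk.support_append]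
      refine List.Nodup.append hp.support_nodup ?_ ?_
      · simp
      · intro y hy hy'
        simp [Walk.support_cons] at hy'
        subst hy'
        exact hv hy
    have := tree_path_length hT _ hp2
    rw [Walk.length_concat] at this
    omega

section deg
variable [Fintype W] [DecidableRel G.Adj]

/-- In a tree, a non-leaf vertex strictly off the geodesic direction can be moved away. -/
lemma tree_step (hT : G.IsTree) {a b c : W}
    (hstrict : G.dist b c < G.dist a b + G.dist a c) (hdeg : 1 < G.degree a) :
    ∃ x, G.dist x b = G.dist a b + 1 ∧ G.dist x c = G.dist a c + 1 := by
  have hab : a ≠ b := by rintro rfl; simp [SimpleGraph.dist_self] at hstrict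
  have hac : a ≠ c := by
    rintro rfl; rw [dist_comm (G := G) (u := b) (v := a)] at hstrict
    simp [SimpleGraph.dist_self] at hstrict
  obtain ⟨p, hp, hlp⟩ := hT.isConnected.exists_path_of_dist a b
  obtain ⟨q, hq, hlq⟩ := hT.isConnected.exists_path_of_dist a c
  cases p with
  | nil => exact absurd rfl hab
  | cons eb pb =>
  cases q with
  | nil => exact absurd rfl hac
  | cons ec pc =>
  rename_i mb mc
  have hmbc : mb = mc := by
    by_contra hne
    have := tree_common_first_step hT eb ec hp hq hne
    omega
  subst hmbc
  -- mb is the unique neighbour towards b and towards c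
  have htb : G.dist mb b + 1 = G.dist a b := by
    have := tree_path_length hT pb hp.of_cons
    simp only [Walk.length_cons] at hlp
    omega
  have htc : G.dist mb c + 1 = G.dist a c := by
    have := tree_path_length hT pc hq.of_cons
    simp only [Walk.length_cons] at hlq
    omega
  obtain ⟨x, hx, hxne⟩ := Finset.exists_mem_ne hdeg mb
  rw [mem_neighborFinset] at hx
  refine ⟨x, ?_, ?_⟩
  · rcases tree_dist_adj hT (x := b) hx with h | h
    · rw [dist_comm (G := G) (u := b) (v := a), dist_comm (G := G) (u := b) (v := x)] at h; omega
    · exfalso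
      apply hxne
      apply tree_towards_unique hT hx eb _ htb
      rw [dist_comm (G := G) (u := b) (v := a), dist_comm (G := G) (u := b) (v := x)] at h; omega
  · rcases tree_dist_adj hT (x := c) hx with h | h
    · rw [dist_comm (G := G) (u := c) (v := a), dist_comm (G := G) (u := c) (v := x)] at h; omega
    · exfalso
      apply hxne
      apply tree_towards_unique hT hx ec _ htc
      rw [dist_comm (G := G) (u := c) (v := a), dist_comm (G := G) (u := c) (v := x)] at h; omega
end deg

section stepA
variable [Fintype W] [DecidableRel G.Adj]

lemma degree_pos_of_connected (hc : G.Connected) {x : W} (hx : ∃ y : W, y ≠ x) :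
    0 < G.degree x := by
  obtain ⟨y, hy⟩ := hx
  rw [G.degree_pos_iff_exists_adj]
  obtain ⟨p, hp, hl⟩ := hc.exists_path_of_dist x y
  cases p with
  | nil => exact (hy rfl).elim
  | cons e q => exact ⟨_, e⟩

/-- In a finite tree with a leaf, `d(·,b) + d(·,c)` is maximised at some leaf. -/
lemma tree_exists_leaf_opt (hT : G.IsTree) {ℓ0 : W} (hl0 : G.degree ℓ0 = 1)
    (hdegpos : ∀ x : W, 0 < G.degree x) (b c : W) :
    ∃ ℓ, G.degree ℓ = 1 ∧ ∀ x, G.dist x b + G.dist x c ≤ G.dist ℓ b + G.dist ℓ c := by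
  obtain ⟨a, -, ha⟩ := Finset.exists_mem_eq_sup (Finset.univ : Finset W) ⟨ℓ0, Finset.mem_univ _⟩
    (fun x => G.dist x b + G.dist x c)
  have hmax : ∀ x, G.dist x b + G.dist x c ≤ G.dist a b + G.dist a c := fun x =>
    ha ▸ Finset.le_sup (f := fun x => G.dist x b + G.dist x c) (Finset.mem_univ x)
  by_cases hcase : G.dist a b + G.dist a c ≤ G.dist b c
  · refine ⟨ℓ0, hl0, fun x => le_trans (hmax x) (le_trans hcase ?_)⟩
    have h1 := hT.isConnected.dist_triangle (u := b) (v := ℓ0) (w := c)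
    rw [dist_comm (G := G) (u := b) (v := ℓ0)] at h1
    omega
  · push_neg at hcase
    by_cases hdeg : G.degree a = 1
    · exact ⟨a, hdeg, hmax⟩
    · have h2 : 1 < G.degree a := lt_of_le_of_ne (hdegpos a) (Ne.symm hdeg)
      obtain ⟨x, hx1, hx2⟩ := tree_step hT hcase h2
      have := hmax x
      omega

/-- pick three distinct elements of a finset of size ≥ 3 -/
lemma exists_three_distinct {s : Finset W} (h : 3 ≤ s.card) :
    ∃ x ∈ s, ∃ y ∈ s, ∃ z ∈ s, x ≠ y ∧ x ≠ z ∧ y ≠ z := by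
  classical
  obtain ⟨x, hx⟩ := Finset.card_pos.1 (by omega : 0 < s.card)
  have h2 : 2 ≤ (s.erase x).card := by
    have := Finset.card_erase_of_mem hx; omega
  obtain ⟨y, hy⟩ := Finset.card_pos.1 (by omega : 0 < (s.erase x).card)
  have h1 : 1 ≤ ((s.erase x).erase y).card := by
    have := Finset.card_erase_of_mem hy; omega
  obtain ⟨z, hz⟩ := Finset.card_pos.1 (by omega : 0 < ((s.erase x).erase y).card)
  refine ⟨x, hx, y, (Finset.mem_erase.1 hy).2, z, (Finset.mem_erase.1 (Finset.mem_erase.1 hz).2).2,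
    ?_, ?_, ?_⟩
  · exact fun h => (Finset.mem_erase.1 hy).1 h.symm
  · exact fun h => (Finset.mem_erase.1 (Finset.mem_erase.1 hz).2).1 h.symm
  · exact fun h => (Finset.mem_erase.1 hz).1 h.symm

/-- A tree whose leaf set has ≥ 3 elements attains its triameter on three distinct leaves. -/
lemma tree_exists_three_leaves (hT : G.IsTree)
    (h3 : 3 ≤ (Finset.univ.filter fun v : W => G.degree v = 1).card) :
    ∃ a b c : W, G.degree a = 1 ∧ G.degree b = 1 ∧ G.degree c = 1 ∧
      a ≠ b ∧ a ≠ c ∧ b ≠ c ∧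
      G.triameter ≤ G.dist a b + G.dist a c + G.dist b c := by
  classical
  set L := (Finset.univ.filter fun v : W => G.degree v = 1) with hL
  obtain ⟨x0, hx0, y0, hy0, z0, hz0, hxy0, hxz0, hyz0⟩ := exists_three_distinct h3
  simp only [hL, Finset.mem_filter] at hx0 hy0 hz0
  have hne : Nonempty W := ⟨x0⟩
  have hdegpos : ∀ x : W, 0 < G.degree x := fun x => by
    refine degree_pos_of_connected hT.isConnected ?_
    by_cases h : x = x0
    · exact ⟨y0, by rintro rfl; exact hxy0 (h.symm)⟩
    · exact ⟨x0, fun hh => h hh.symm⟩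
  -- the triameter is attained
  obtain ⟨⟨a, b, c⟩, -, habc⟩ := Finset.exists_mem_eq_sup
    (Finset.univ : Finset (W × W × W)) Finset.univ_nonempty
    (fun p : W × W × W => G.dist p.1 p.2.1 + G.dist p.1 p.2.2 + G.dist p.2.1 p.2.2)
  rw [SimpleGraph.triameter, habc]
  simp only
  -- replace a, then b, then c by leaves
  obtain ⟨la, hla, hmaxa⟩ := tree_exists_leaf_opt hT hx0.2 hdegpos b c
  obtain ⟨lb, hlb, hmaxb⟩ := tree_exists_leaf_opt hT hx0.2 hdegpos la c
  obtain ⟨lc, hlc, hmaxc⟩ := tree_exists_leaf_opt hT hx0.2 hdegpos la lb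
  have key : G.dist a b + G.dist a c + G.dist b c ≤
      G.dist la lb + G.dist la lc + G.dist lb lc := by
    have h1 := hmaxa a
    have h2 := hmaxb b
    have h3 := hmaxc c
    have e1 : G.dist b la = G.dist la b := dist_comm
    have e2 : G.dist c la = G.dist la c := dist_comm
    have e3 : G.dist c lb = G.dist lb c := dist_comm
    have e4 : G.dist b c = G.dist c b := dist_comm
    have e5 : G.dist lb la = G.dist la lb := dist_comm
    have e6 : G.dist lc la = G.dist la lc := dist_comm
    have e7 : G.dist lc lb = G.dist lb lc := dist_comm
    omega
  -- now make the three leaves pairwise distinct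
  have helper : ∀ u v : W, G.degree u = 1 → G.degree v = 1 →
      ∃ p q r : W, G.degree p = 1 ∧ G.degree q = 1 ∧ G.degree r = 1 ∧
        p ≠ q ∧ p ≠ r ∧ q ≠ r ∧
        2 * G.dist u v ≤ G.dist p q + G.dist p r + G.dist q r := by
    intro u v hu hv
    by_cases huv : u = v
    · subst huv
      exact ⟨x0, y0, z0, hx0.2, hy0.2, hz0.2, hxy0, hxz0, hyz0, by
        simp [SimpleGraph.dist_self]⟩
    · -- pick a third leaf distinct from u and v
      have hcard : 2 ≤ (L.erase u |>.erase v).card → True := fun _ => trivial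
      have huL : u ∈ L := by simp [hL, hu]
      have hvL : v ∈ L := by simp [hL, hv]
      have h1 : 1 ≤ ((L.erase u).erase v).card := by
        have c1 := Finset.card_erase_of_mem huL
        have hvL' : v ∈ L.erase u := Finset.mem_erase.2 ⟨fun h => huv h.symm, hvL⟩
        have c2 := Finset.card_erase_of_mem hvL'
        omega
      obtain ⟨w, hw⟩ := Finset.card_pos.1 (by omega : 0 < ((L.erase u).erase v).card)
      have hwv : w ≠ v := (Finset.mem_erase.1 hw).1
      have hwu : w ≠ u := (Finset.mem_erase.1 (Finset.mem_erase.1 hw).2).1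
      have hwL : w ∈ L := (Finset.mem_erase.1 (Finset.mem_erase.1 hw).2).2
      have hwleaf : G.degree w = 1 := (Finset.mem_filter.1 hwL).2
      refine ⟨u, v, w, hu, hv, hwleaf, huv, fun h => hwu h.symm, fun h => hwv h.symm, ?_⟩
      have htri := hT.isConnected.dist_triangle (u := u) (v := w) (w := v)
      have e1 : G.dist v w = G.dist w v := dist_comm
      omega
  by_cases d1 : la = lb
  · subst d1
    obtain ⟨p, q, r, h1, h2, h3, h4, h5, h6, h7⟩ := helper la lc hla hlc
    refine ⟨p, q, r, h1, h2, h3, h4, h5, h6, ?_⟩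
    have : G.dist la la = 0 := SimpleGraph.dist_self
    omega
  by_cases d2 : la = lc
  · subst d2
    obtain ⟨p, q, r, h1, h2, h3, h4, h5, h6, h7⟩ := helper la lb hla hlb
    refine ⟨p, q, r, h1, h2, h3, h4, h5, h6, ?_⟩
    have : G.dist la la = 0 := SimpleGraph.dist_self
    have e : G.dist lb la = G.dist la lb := dist_comm
    omega
  by_cases d3 : lb = lc
  · subst d3
    obtain ⟨p, q, r, h1, h2, h3, h4, h5, h6, h7⟩ := helper la lb hla hlb
    refine ⟨p, q, r, h1, h2, h3, h4, h5, h6, ?_⟩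
    have : G.dist lb lb = 0 := SimpleGraph.dist_self
    omega
  exact ⟨la, lb, lc, hla, hlb, hlc, d1, d2, d3, key⟩

end stepA

section comap

variable {V : Type*} [Fintype V] (T : SimpleGraph V) [DecidableRel T.Adj]

local notation "S" => {w : V // T.degree w ≠ 1}
local notation "G'" => T.comap (Subtype.val : S → V)

/-- the inclusion homomorphism -/
def incl : G' →g T := ⟨Subtype.val, id⟩

variable {T}

/-- internal vertices of a path are non-leaves -/
lemma internal_one_lt_degree (hT : T.IsTree) {u v : V} {p : T.Walk u v} (hp : p.IsPath)
    {x : V} (hx : x ∈ p.support) (hxu : x ≠ u) (hxv : x ≠ v) : 1 < T.degree x := by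
  classical
  set t := p.takeUntil x hx with ht
  set d := p.dropUntil x hx with hd
  have htp : t.IsPath := hp.takeUntil hx
  have hdp : d.IsPath := hp.dropUntil hx
  -- successor neighbour from d
  obtain ⟨n2, e2, d', hd'⟩ : ∃ (n2 : V) (e2 : T.Adj x n2) (d' : T.Walk n2 v), d = Walk.cons e2 d' := by
    cases hdd : d with
    | nil => exact absurd rfl hxv
    | cons e2 d' => exact ⟨_, e2, d', rfl⟩
  -- predecessor neighbour from t.reverse
  obtain ⟨n1, e1, t', ht'⟩ : ∃ (n1 : V) (e1 : T.Adj x n1) (t' : T.Walk n1 u), t.reverse = Walk.cons e1 t' := by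
    cases htt : t.reverse with
    | nil => exact absurd rfl hxu
    | cons e1 t' => exact ⟨_, e1, t', rfl⟩
  have hn1t : n1 ∈ t.support := by
    have : n1 ∈ t.reverse.support := by rw [ht']; simp [Walk.support_cons]
    rwa [Walk.support_reverse, List.mem_reverse] at this
  have hn2d : n2 ∈ d.support.tail := by
    rw [hd']
    simp only [Walk.support_cons, List.tail_cons]
    exact d'.start_mem_support
  have hnd : (t.support ++ d.support.tail).Nodup := by
    have := hp.support_nodup
    rw [← p.take_spec hx, Walk.support_append] at this
    exact this
  have hne : n1 ≠ n2 := by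
    intro h
    subst h
    exact (List.disjoint_of_nodup_append hnd) hn1t hn2d
  rw [← T.card_neighborFinset_eq_degree]
  exact Finset.one_lt_card.2 ⟨n1, (T.mem_neighborFinset x n1).2 e1, n2,
    (T.mem_neighborFinset x n2).2 e2, hne⟩

/-- lift a walk with non-leaf support into the induced graph -/
lemma lift_walk {u v : V} (p : T.Walk u v)
    (hs : ∀ x ∈ p.support, T.degree x ≠ 1) :
    ∃ q : (G').Walk ⟨u, hs u p.start_mem_support⟩ ⟨v, hs v p.end_mem_support⟩,
      q.length = p.length := by
  induction p with
  | nil => exact ⟨Walk.nil, rfl⟩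
  | cons e p' ih =>
    rename_i a b c
    have hs' : ∀ x ∈ p'.support, T.degree x ≠ 1 := fun x hx =>
      hs x (by simp [Walk.support_cons, hx])
    obtain ⟨q', hq'⟩ := ih hs'
    exact ⟨Walk.cons (by exact e : (G').Adj ⟨a, _⟩ ⟨b, _⟩) q', by exact congrArg (· + 1) hq'⟩

lemma dist_comap (hT : T.IsTree) {u v : V} (hu : T.degree u ≠ 1) (hv : T.degree v ≠ 1) :
    (G').dist ⟨u, hu⟩ ⟨v, hv⟩ = T.dist u v := by
  obtain ⟨p, hp, hl⟩ := hT.isConnected.exists_path_of_dist u v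
  have hs : ∀ x ∈ p.support, T.degree x ≠ 1 := by
    intro x hx
    by_cases hxu : x = u
    · subst hxu; exact hu
    by_cases hxv : x = v
    · subst hxv; exact hv
    have := internal_one_lt_degree hT hp hx hxu hxv
    omega
  obtain ⟨q, hq⟩ := lift_walk p hs
  refine le_antisymm (le_trans (SimpleGraph.dist_le q) (by omega)) ?_
  have hr : (G').Reachable ⟨u, hu⟩ ⟨v, hv⟩ := ⟨q⟩
  obtain ⟨r, hr'⟩ := hr.exists_walk_length_eq_dist
  calc T.dist u v ≤ (r.map (incl T)).length := SimpleGraph.dist_le _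
    _ = (G').dist ⟨u, hu⟩ ⟨v, hv⟩ := by rw [Walk.length_map, hr']

lemma comap_isTree (hT : T.IsTree) (hne : Nonempty S) : (T.comap (Subtype.val : S → V)).IsTree := by
  constructor
  · have : Nonempty S := hne
    refine ⟨fun x y => ?_⟩
    obtain ⟨u, hu⟩ := x
    obtain ⟨v, hv⟩ := y
    obtain ⟨p, hp, hl⟩ := hT.isConnected.exists_path_of_dist u v
    have hs : ∀ x ∈ p.support, T.degree x ≠ 1 := by
      intro x hx
      by_cases hxu : x = u
      · subst hxu; exact hu
      by_cases hxv : x = v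
      · subst hxv; exact hv
      have := internal_one_lt_degree hT hp hx hxu hxv
      omega
    obtain ⟨q, -⟩ := lift_walk p hs
    exact ⟨q⟩
  · intro x c hc
    exact hT.IsAcyclic (c.map (incl T)) (hc.map Subtype.val_injective)

/-- a vertex of `T'` of degree one in `T'` has a `T`-neighbour which is a leaf of `T`,
provided it has `T`-degree at least 2 -/
lemma exists_leaf_neighbor {u : V} (hu : T.degree u ≠ 1)
    (hdeg : 2 ≤ T.degree u)
    (hu' : (T.comap (Subtype.val : S → V)).degree (⟨u, hu⟩ : S) = 1) :
    ∃ l : V, T.Adj u l ∧ T.degree l = 1 := by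
  classical
  by_contra hno
  push_neg at hno
  have hinj : ∀ w ∈ T.neighborFinset u,
      (fun w : V => if h : T.degree w ≠ 1 then (⟨w, h⟩ : S) else ⟨u, hu⟩) w ∈
        (T.comap (Subtype.val : S → V)).neighborFinset ⟨u, hu⟩ := by
    intro w hw
    rw [SimpleGraph.mem_neighborFinset] at hw ⊢
    have hwl : T.degree w ≠ 1 := hno w hw
    simp only [dif_pos hwl]
    exact hw
  have hcard := Finset.card_le_card_of_injOn _ hinj ?_
  · rw [SimpleGraph.card_neighborFinset_eq_degree, SimpleGraph.card_neighborFinset_eq_degree,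
      hu'] at hcard
    omega
  · intro w1 h1 w2 h2 heq
    rw [Finset.mem_coe, SimpleGraph.mem_neighborFinset] at h1 h2
    simp only [dif_pos (hno w1 h1), dif_pos (hno w2 h2)] at heq
    exact congrArg Subtype.val heq

/-- unique neighbour of a leaf -/
lemma leaf_unique_nbr {l : V} (hl : T.degree l = 1) :
    ∃ n : V, T.Adj l n ∧ ∀ y, T.Adj l y → y = n := by
  classical
  obtain ⟨n, hn⟩ := Finset.card_eq_one.1 (by rwa [SimpleGraph.card_neighborFinset_eq_degree] :
    (T.neighborFinset l).card = 1)
  refine ⟨n, ?_, fun y hy => ?_⟩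
  · have : n ∈ T.neighborFinset l := hn ▸ Finset.mem_singleton_self n
    rwa [SimpleGraph.mem_neighborFinset] at this
  · have : y ∈ T.neighborFinset l := (T.mem_neighborFinset l y).2 hy
    rw [hn, Finset.mem_singleton] at this
    exact this

/-- distance from a leaf steps through its unique neighbour -/
lemma leaf_dist_step (hT : T.IsTree) {l n : V} (hl : T.Adj l n)
    (huniq : ∀ y, T.Adj l y → y = n) {x : V} (hx : x ≠ l) :
    T.dist l x = T.dist n x + 1 := by
  obtain ⟨p, hp, hlen⟩ := hT.isConnected.exists_path_of_dist l x
  cases p with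
  | nil => exact absurd rfl hx.symm
  | cons e q =>
    rename_i m
    have hm : m = n := huniq m e
    subst hm
    have := tree_path_length hT q hp.of_cons
    simp only [Walk.length_cons] at hlen
    omega

/-- the neighbour of a leaf is not a leaf (when there are ≥ 3 vertices) -/
lemma leaf_nbr_not_leaf (hT : T.IsTree) (hcard : 3 ≤ Fintype.card V)
    {l n : V} (hl : T.degree l = 1) (hadj : T.Adj l n)
    (huniq : ∀ y, T.Adj l y → y = n) : T.degree n ≠ 1 := by
  classical
  intro hn
  obtain ⟨n', hn', hu'⟩ := leaf_unique_nbr (T := T) hn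
  have hn'l : n' = l := (hu' l hadj.symm).symm
  have huniq' : ∀ y, T.Adj n y → y = l := fun y hy => (hu' y hy).trans hn'l
  -- get a third vertex
  have : 2 < Fintype.card V := by omega
  obtain ⟨w, hw⟩ := Finset.card_pos.1 (show 0 < ((Finset.univ : Finset V) \ {l, n}).card by
    have h1 : ({l, n} : Finset V).card ≤ 2 := Finset.card_insert_le _ _ |>.trans (by simp)
    have h2 := Finset.card_sdiff_add_card_eq_card (Finset.subset_univ ({l, n} : Finset V))
    rw [Finset.card_univ] at h2
    omega)
  rw [Finset.mem_sdiff, Finset.mem_insert, Finset.mem_singleton] at hw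
  push_neg at hw
  obtain ⟨-, hwl, hwn⟩ := hw
  -- every walk starting at l or n stays in {l, n}
  have trap : ∀ (z w' : V) (q : T.Walk z w'), w' ≠ l → w' ≠ n → (z = l ∨ z = n) → False := by
    intro z w' q
    induction q with
    | nil =>
      rintro h1 h2 (rfl | rfl)
      · exact h1 rfl
      · exact h2 rfl
    | cons e q' ih =>
      rintro h1 h2 (rfl | rfl)
      · exact ih h1 h2 (Or.inr (huniq _ e))
      · exact ih h1 h2 (Or.inl (huniq' _ e))
  obtain ⟨q⟩ := hT.isConnected l w
  exact trap l w q hwl hwn (Or.inl rfl)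


end comap

end Aux

/-- If `T` is a tree with at least `5` vertices and the tree `T'` obtained from `T`
by deleting all of its leaves has at least `3` leaves, then `tr(T) = tr(T') + 6`. -/
theorem triameter_eq_triameter_deleteLeaves_add_six {V : Type*} [Fintype V]
    (T : SimpleGraph V) [DecidableRel T.Adj] (hT : T.IsTree)
    (hn : 5 ≤ Fintype.card V)
    (h3 : 3 ≤ (Finset.univ.filter fun v : {w : V // T.degree w ≠ 1} =>
        (T.comap (Subtype.val : {w : V // T.degree w ≠ 1} → V)).degree v = 1).card) :
    T.triameter =
      (T.comap (Subtype.val : {w : V // T.degree w ≠ 1} → V)).triameter + 6 := by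
  classical
  set G' := T.comap (Subtype.val : {w : V // T.degree w ≠ 1} → V) with hG'
  have hS3 : 3 ≤ Fintype.card {w : V // T.degree w ≠ 1} := by
    calc 3 ≤ _ := h3
    _ ≤ (Finset.univ : Finset {w : V // T.degree w ≠ 1}).card := Finset.card_filter_le _ _
    _ = _ := Finset.card_univ
  have hneS : Nonempty {w : V // T.degree w ≠ 1} := by
    rw [← Fintype.card_pos_iff]; omega
  have hT' : G'.IsTree := comap_isTree hT hneS
  have hdegposT : ∀ x : V, 0 < T.degree x := fun x =>
    degree_pos_of_connected hT.isConnected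
      (by obtain ⟨y, hy⟩ := Fintype.exists_ne_of_one_lt_card (by omega) x; exact ⟨y, hy⟩)
  have hVne : Nonempty V := hneS.elim fun x => ⟨x.1⟩
  -- the projection to non-leaves
  have projspec : ∀ x : V, ∃ px : {w : V // T.degree w ≠ 1}, T.dist x ↑px ≤ 1 := by
    intro x
    by_cases h : T.degree x ≠ 1
    · exact ⟨⟨x, h⟩, by simp [SimpleGraph.dist_self]⟩
    · push_neg at h
      obtain ⟨n, hadj, huniq⟩ := leaf_unique_nbr h
      refine ⟨⟨n, leaf_nbr_not_leaf hT (by omega) h hadj huniq⟩, ?_⟩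
      exact le_of_eq ((T.dist_eq_one_iff_adj).2 hadj)
  choose proj hproj using projspec
  have pair : ∀ x y : V, T.dist x y ≤ T.dist ↑(proj x) ↑(proj y) + 2 := by
    intro x y
    have t1 := hT.isConnected.dist_triangle (u := x) (v := (proj x : V)) (w := y)
    have t2 := hT.isConnected.dist_triangle (u := (proj x : V)) (v := (proj y : V)) (w := y)
    have c1 : T.dist ↑(proj y) y = T.dist y ↑(proj y) := dist_comm
    have h1 := hproj x
    have h2 := hproj y
    omega
  have distcoe : ∀ u v : {w : V // T.degree w ≠ 1}, G'.dist u v = T.dist ↑u ↑v := by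
    intro u v
    exact dist_comap hT u.2 v.2
  -- upper bound
  have upper : T.triameter ≤ G'.triameter + 6 := by
    rw [SimpleGraph.triameter]
    refine Finset.sup_le ?_
    rintro ⟨x, y, z⟩ -
    simp only
    have k1 := pair x y
    have k2 := pair x z
    have k3 := pair y z
    have hsup : G'.dist (proj x) (proj y) + G'.dist (proj x) (proj z) +
        G'.dist (proj y) (proj z) ≤ G'.triameter :=
      Finset.le_sup (f := fun p : _ × _ × _ =>
        G'.dist p.1 p.2.1 + G'.dist p.1 p.2.2 + G'.dist p.2.1 p.2.2)
        (Finset.mem_univ (proj x, proj y, proj z))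
    rw [distcoe, distcoe, distcoe] at hsup
    omega
  -- lower bound
  have lower : G'.triameter + 6 ≤ T.triameter := by
    obtain ⟨a, b, c, hla, hlb, hlc, hab, hac, hbc, htr⟩ := tree_exists_three_leaves hT' h3
    have hdeg2 : ∀ s : {w : V // T.degree w ≠ 1}, 2 ≤ T.degree ↑s := by
      intro s
      have := hdegposT ↑s
      have := s.2
      omega
    obtain ⟨la, haa, hla1⟩ := exists_leaf_neighbor a.2 (hdeg2 a) hla
    obtain ⟨lb, hbb, hlb1⟩ := exists_leaf_neighbor b.2 (hdeg2 b) hlb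
    obtain ⟨lc, hcc, hlc1⟩ := exists_leaf_neighbor c.2 (hdeg2 c) hlc
    -- unique neighbours
    have nbr : ∀ (l : V) (s : {w : V // T.degree w ≠ 1}), T.degree l = 1 → T.Adj ↑s l →
        ∀ y, T.Adj l y → y = ↑s := by
      intro l s hl hadj y hy
      obtain ⟨n, hn, huniq⟩ := leaf_unique_nbr hl
      rw [huniq y hy, ← huniq ↑s hadj.symm]
    have huniqa := nbr la a hla1 haa
    have huniqb := nbr lb b hlb1 hbb
    have huniqc := nbr lc c hlc1 hcc
    -- the attached leaves are pairwise distinct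
    have hdistinct : ∀ (l l' : V) (s s' : {w : V // T.degree w ≠ 1}),
        T.degree l = 1 → T.Adj ↑s l → T.degree l' = 1 → T.Adj ↑s' l' → s ≠ s' → l ≠ l' := by
      intro l l' s s' hl hs hl' hs' hss heq
      subst heq
      exact hss (Subtype.ext ((nbr l s hl hs ↑s' hs'.symm).symm))
    have dab : T.dist la lb = T.dist ↑a ↑b + 2 := by
      have h1 : T.dist la lb = T.dist ↑a lb + 1 :=
        leaf_dist_step hT haa.symm huniqa
          (fun h => hdistinct la lb a b hla1 haa hlb1 hbb (fun e => hab e) h.symm)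
      have h2 : T.dist lb ↑a = T.dist ↑b ↑a + 1 :=
        leaf_dist_step hT hbb.symm huniqb
          (fun h => a.2 (h ▸ hlb1))
      have c1 : T.dist ↑a lb = T.dist lb ↑a := dist_comm
      have c2 : T.dist ↑b ↑a = T.dist ↑a ↑b := dist_comm
      omega
    have dac : T.dist la lc = T.dist ↑a ↑c + 2 := by
      have h1 : T.dist la lc = T.dist ↑a lc + 1 :=
        leaf_dist_step hT haa.symm huniqa
          (fun h => hdistinct la lc a c hla1 haa hlc1 hcc (fun e => hac e) h.symm)
      have h2 : T.dist lc ↑a = T.dist ↑c ↑a + 1 :=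
        leaf_dist_step hT hcc.symm huniqc
          (fun h => a.2 (h ▸ hlc1))
      have c1 : T.dist ↑a lc = T.dist lc ↑a := dist_comm
      have c2 : T.dist ↑c ↑a = T.dist ↑a ↑c := dist_comm
      omega
    have dbc : T.dist lb lc = T.dist ↑b ↑c + 2 := by
      have h1 : T.dist lb lc = T.dist ↑b lc + 1 :=
        leaf_dist_step hT hbb.symm huniqb
          (fun h => hdistinct lb lc b c hlb1 hbb hlc1 hcc (fun e => hbc e) h.symm)
      have h2 : T.dist lc ↑b = T.dist ↑c ↑b + 1 :=
        leaf_dist_step hT hcc.symm huniqc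
          (fun h => b.2 (h ▸ hlc1))
      have c1 : T.dist ↑b lc = T.dist lc ↑b := dist_comm
      have c2 : T.dist ↑c ↑b = T.dist ↑b ↑c := dist_comm
      omega
    have hsup : T.dist la lb + T.dist la lc + T.dist lb lc ≤ T.triameter :=
      Finset.le_sup (f := fun p : V × V × V =>
        T.dist p.1 p.2.1 + T.dist p.1 p.2.2 + T.dist p.2.1 p.2.2)
        (Finset.mem_univ (la, lb, lc))
    have e1 := distcoe a b
    have e2 := distcoe a c
    have e3 := distcoe b c
    omega
  omega
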